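/- (Algebraic form of Lemma 3.2.) Let n ≥ 3, let m, λ, ρ be real numbers, let Ric be a symmetric bilinear form on V with scal := Σ_i Ric(e_i,e_i), and let v ≠ 0 and p in V satisfy scal = (n−1)λ − (m−1)ρ and Ric(X,v) = ρ⟨X,v⟩ − (m/2)⟨X,p⟩ for all X ∈ V. Let (e_2,…,e_n) be an orthonormal basis of v^⊥, define h_{ab} := (1/|v|)(λ δ_{ab} − Ric(e_a,e_b)) and σ := (1/(n−1)) Σ_{a=2}^n h_{aa}. Then |D|² = (2|v|⁴/(n−2)²)·Σ_{a,b=2}^n (h_{ab} − σδ_{ab})² + (m²/(2(n−1)(n−2)))·(|p|² − ⟨p,v⟩²/|v|²); equivalently, if m ≠ 1, the last term equals (m²/(2(n−1)(n−2)(m−1)²)) times the squared norm of the component of the vector −(m−1)p (representing ∇scal) orthogonal to v. -/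

import Mathlib

section Aux

private lemma sum1_congr {ι : Type*} [Fintype ι] {f g : ι → ℝ} (h : ∀ i, f i = g i) :
    (∑ i, f i) = ∑ i, g i := Finset.sum_congr rfl fun i _ => h i

private lemma sum2_congr {ι : Type*} [Fintype ι] {f g : ι → ι → ℝ} (h : ∀ i j, f i j = g i j) :
    (∑ i, ∑ j, f i j) = ∑ i, ∑ j, g i j :=
  Finset.sum_congr rfl fun i _ => Finset.sum_congr rfl fun j _ => h i j

private lemma sum3_congr {ι : Type*} [Fintype ι] {f g : ι → ι → ι → ℝ}
    (h : ∀ i j k, f i j k = g i j k) :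
    (∑ i, ∑ j, ∑ k, f i j k) = ∑ i, ∑ j, ∑ k, g i j k :=
  Finset.sum_congr rfl fun i _ => Finset.sum_congr rfl fun j _ =>
    Finset.sum_congr rfl fun k _ => h i j k

end Aux

open scoped InnerProductSpace

lemma sumT {ι : Type*} [Fintype ι] [DecidableEq ι] (F C : ι → ℝ) (G : ι → ι → ℝ) :
    (∑ i, ∑ j, ∑ k, (F i * (if j = k then (1:ℝ) else 0)
        - F j * (if i = k then (1:ℝ) else 0) + G j k * C i - G i k * C j)^2)
    = (2*(Fintype.card ι : ℝ) - 2) * (∑ i, F i^2)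
      + 2 * (∑ i, C i^2) * (∑ i, ∑ k, G i k^2)
      + 4 * (∑ i, F i * C i) * (∑ i, G i i)
      - 4 * (∑ i, ∑ j, F i * G i j * C j)
      - 2 * (∑ k, (∑ i, C i * G i k)^2) := by
  have e1 : ∀ i j k : ι, (F i * (if j = k then (1:ℝ) else 0)
        - F j * (if i = k then (1:ℝ) else 0) + G j k * C i - G i k * C j)^2
      = (if j = k then F i^2 else 0) + (if i = k then F j^2 else 0)
        - (if j = k then (if i = k then 2*F i*F j else 0) else 0)
        + (if j = k then 2*F i*C i*G j k - 2*F i*C j*G i k else 0)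
        + (if i = k then 2*F j*C j*G i k - 2*F j*C i*G j k else 0)
        + (C i^2 * G j k^2 + C j^2 * G i k^2 - 2*C i*C j*(G j k * G i k)) := by
    intro i j k
    by_cases hjk : j = k <;> by_cases hik : i = k <;> simp [hjk, hik] <;> ring
  have step1 : ∀ i j : ι, (∑ k, (F i * (if j = k then (1:ℝ) else 0)
        - F j * (if i = k then (1:ℝ) else 0) + G j k * C i - G i k * C j)^2)
      = F i^2 + F j^2 - (if i = j then 2*F i*F j else 0)
        + (2*F i*C i*G j j - 2*F i*C j*G i j) + (2*F j*C j*G i i - 2*F j*C i*G j i)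
        + ((∑ k, C i^2 * G j k^2) + (∑ k, C j^2 * G i k^2)
           - (∑ k, 2*C i*C j*(G j k * G i k))) := by
    intro i j
    simp only [e1]
    simp only [Finset.sum_add_distrib, Finset.sum_sub_distrib, Finset.sum_ite_eq,
      Finset.mem_univ, if_true]
  have step2 : ∀ i : ι, (∑ j, ∑ k, (F i * (if j = k then (1:ℝ) else 0)
        - F j * (if i = k then (1:ℝ) else 0) + G j k * C i - G i k * C j)^2)
      = ((Fintype.card ι : ℝ) * F i^2 + (∑ j, F j^2) - 2*F i*F i
        + ((∑ j, 2*F i*C i*G j j) - (∑ j, 2*F i*C j*G i j))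
        + ((∑ j, 2*F j*C j*G i i) - (∑ j, 2*F j*C i*G j i))
        + ((∑ j, ∑ k, C i^2 * G j k^2) + (∑ j, ∑ k, C j^2 * G i k^2)
           - (∑ j, ∑ k, 2*C i*C j*(G j k * G i k)))) := by
    intro i
    simp only [step1]
    simp only [Finset.sum_add_distrib, Finset.sum_sub_distrib, Finset.sum_ite_eq,
      Finset.mem_univ, if_true, Finset.sum_const, Finset.card_univ, nsmul_eq_mul]
  simp only [step2]
  simp only [Finset.sum_add_distrib, Finset.sum_sub_distrib]
  have H1 : (∑ i : ι, (Fintype.card ι : ℝ) * F i^2)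
      = (Fintype.card ι : ℝ) * ∑ i, F i^2 := by rw [Finset.mul_sum]
  have H2 : (∑ _i : ι, ∑ j, F j^2) = (Fintype.card ι : ℝ) * ∑ i, F i^2 := by
    rw [Finset.sum_const, Finset.card_univ, nsmul_eq_mul]
  have H3 : (∑ i : ι, 2*F i*F i) = 2 * ∑ i, F i^2 := by
    rw [Finset.mul_sum]; exact sum1_congr fun i => by ring
  have H4 : (∑ i : ι, ∑ j, 2*F i*C i*G j j)
      = 2 * ((∑ i, F i * C i) * (∑ i, G i i)) := by
    rw [Finset.sum_mul_sum]
    simp only [Finset.mul_sum]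
    exact sum2_congr fun i j => by ring
  have H5 : (∑ i : ι, ∑ j, 2*F i*C j*G i j) = 2 * ∑ i, ∑ j, F i * G i j * C j := by
    simp only [Finset.mul_sum]
    exact sum2_congr fun i j => by ring
  have H6 : (∑ i : ι, ∑ j, 2*F j*C j*G i i) = ∑ i : ι, ∑ j, 2*F i*C i*G j j :=
    Finset.sum_comm
  have H7 : (∑ i : ι, ∑ j, 2*F j*C i*G j i) = ∑ i : ι, ∑ j, 2*F i*C j*G i j :=
    Finset.sum_comm
  have H8 : (∑ i : ι, ∑ j, ∑ k, C i^2 * G j k^2)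
      = (∑ i, C i^2) * (∑ i, ∑ k, G i k^2) := by
    rw [Finset.sum_mul]
    simp only [Finset.mul_sum]
  have H9 : (∑ i : ι, ∑ j, ∑ k, C j^2 * G i k^2)
      = ∑ i : ι, ∑ j, ∑ k, C i^2 * G j k^2 := Finset.sum_comm
  have H10 : (∑ i : ι, ∑ j, ∑ k, 2*C i*C j*(G j k * G i k))
      = 2 * ∑ k, (∑ i, C i * G i k)^2 := by
    have e2 : ∀ k : ι, (2:ℝ) * (∑ i, C i * G i k)^2
        = ∑ i, ∑ j, 2*(C i * G i k * (C j * G j k)) := by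
      intro k; rw [sq, Finset.sum_mul_sum]; simp only [Finset.mul_sum]
    calc (∑ i : ι, ∑ j, ∑ k, 2*C i*C j*(G j k * G i k))
        = ∑ i : ι, ∑ k, ∑ j, 2*(C i * G i k * (C j * G j k)) := by
          refine sum1_congr fun i => ?_
          rw [Finset.sum_comm]
          exact sum2_congr fun k j => by ring
      _ = ∑ k : ι, ∑ i, ∑ j, 2*(C i * G i k * (C j * G j k)) := Finset.sum_comm
      _ = ∑ k : ι, 2 * (∑ i, C i * G i k)^2 := sum1_congr fun k => (e2 k).symm
      _ = 2 * ∑ k, (∑ i, C i * G i k)^2 := (Finset.mul_sum _ _ _).symm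
  rw [H1, H2, H3, H6, H7, H4, H5, H9, H8, H10]
  ring

variable {E : Type*} [NormedAddCommGroup E] [InnerProductSpace ℝ E] [FiniteDimensional ℝ E]


/-- Riesz vector for a linear functional. -/
noncomputable def riesz (φ : E →ₗ[ℝ] ℝ) : E :=
  (InnerProductSpace.toDual ℝ E).symm (LinearMap.toContinuousLinearMap φ)

lemma riesz_inner (φ : E →ₗ[ℝ] ℝ) (x : E) : ⟪riesz φ, x⟫_ℝ = φ x :=
  InnerProductSpace.toDual_symm_apply

lemma sumsq_eq {α : Type*} [Fintype α] (d : OrthonormalBasis α ℝ E) (φ : E →ₗ[ℝ] ℝ) :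
    (∑ i, (φ (d i))^2) = ⟪riesz φ, riesz φ⟫_ℝ := by
  rw [← d.sum_inner_mul_inner (riesz φ) (riesz φ)]
  exact sum1_congr fun i => by
    rw [riesz_inner, ← real_inner_comm (d i) (riesz φ), riesz_inner]; ring

/-- Sum of squares of a linear functional over an orthonormal basis is basis independent. -/
lemma sumsq_basis {ι κ : Type*} [Fintype ι] [Fintype κ]
    (b : OrthonormalBasis ι ℝ E) (c : OrthonormalBasis κ ℝ E) (φ : E →ₗ[ℝ] ℝ) :
    (∑ i, (φ (b i))^2) = ∑ k, (φ (c k))^2 :=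
  (sumsq_eq b φ).trans (sumsq_eq c φ).symm

/-- Trace of a bilinear form over an orthonormal basis is basis independent. -/
lemma trace_basis {ι κ : Type*} [Fintype ι] [Fintype κ]
    (b : OrthonormalBasis ι ℝ E) (c : OrthonormalBasis κ ℝ E) (B : E →ₗ[ℝ] E →ₗ[ℝ] ℝ) :
    (∑ i, B (b i) (b i)) = ∑ k, B (c k) (c k) := by
  have expand : ∀ i, B (b i) (b i) = ∑ k, ⟪c k, b i⟫_ℝ * B (b i) (c k) := by
    intro i
    calc B (b i) (b i) = B (b i) (∑ k, ⟪c k, b i⟫_ℝ • c k) := by rw [c.sum_repr']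
      _ = ∑ k, ⟪c k, b i⟫_ℝ * B (b i) (c k) := by
          rw [map_sum]
          exact sum1_congr fun k => by rw [map_smul, smul_eq_mul]
  calc (∑ i, B (b i) (b i))
      = ∑ i, ∑ k, ⟪c k, b i⟫_ℝ * ⟪riesz (B.flip (c k)), b i⟫_ℝ := by
        refine sum1_congr fun i => ?_
        rw [expand i]
        exact sum1_congr fun k => by rw [riesz_inner]; rfl
    _ = ∑ k, ∑ i, ⟪c k, b i⟫_ℝ * ⟪b i, riesz (B.flip (c k))⟫_ℝ := by
        rw [Finset.sum_comm]
        exact Finset.sum_congr rfl fun k _ => sum1_congr fun i => by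
          rw [real_inner_comm (b i) (riesz (B.flip (c k)))]
    _ = ∑ k, ⟪c k, riesz (B.flip (c k))⟫_ℝ := sum1_congr fun k =>
        b.sum_inner_mul_inner _ _
    _ = ∑ k, B (c k) (c k) := sum1_congr fun k => by
        rw [real_inner_comm, riesz_inner]; rfl

/-- Squared Frobenius norm of a bilinear form over an orthonormal basis is basis independent. -/
lemma frob_basis {ι κ : Type*} [Fintype ι] [Fintype κ]
    (b : OrthonormalBasis ι ℝ E) (c : OrthonormalBasis κ ℝ E) (B : E →ₗ[ℝ] E →ₗ[ℝ] ℝ) :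
    (∑ i, ∑ j, (B (b i) (b j))^2) = ∑ k, ∑ l, (B (c k) (c l))^2 := by
  calc (∑ i, ∑ j, (B (b i) (b j))^2)
      = ∑ i, ∑ l, (B (b i) (c l))^2 := sum1_congr fun i => sumsq_basis b c (B (b i))
    _ = ∑ l, ∑ i, (B.flip (c l) (b i))^2 := by
        rw [Finset.sum_comm]
        exact Finset.sum_congr rfl fun l _ => sum1_congr fun i => rfl
    _ = ∑ l, ∑ k, (B.flip (c l) (c k))^2 := sum1_congr fun l =>
        sumsq_basis b c (B.flip (c l))
    _ = ∑ k, ∑ l, (B (c k) (c l))^2 := by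
        rw [Finset.sum_comm]
        exact Finset.sum_congr rfl fun k _ => sum1_congr fun l => rfl

set_option maxHeartbeats 1000000 in
/-- Algebraic form of Lemma 3.2: `|D|²` equals the squared norm of the traceless
second fundamental form of a level set, plus a term measuring the tangential
gradient of the scalar curvature. -/
theorem stmt_5 (n : ℕ) (hn : 3 ≤ n) (m lam rho : ℝ)
    (e : OrthonormalBasis (Fin n) ℝ (EuclideanSpace ℝ (Fin n)))
    (Ric : EuclideanSpace ℝ (Fin n) →ₗ[ℝ] EuclideanSpace ℝ (Fin n) →ₗ[ℝ] ℝ)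
    (hRicSymm : ∀ X Y, Ric X Y = Ric Y X)
    (scal : ℝ) (hscal : scal = ∑ i, Ric (e i) (e i))
    (v p : EuclideanSpace ℝ (Fin n)) (hv : v ≠ 0)
    (hscalEq : scal = ((n : ℝ) - 1) * lam - (m - 1) * rho)
    (hRicv : ∀ X, Ric X v = rho * ⟪X, v⟫_ℝ - (m / 2) * ⟪X, p⟫_ℝ)
    (u : Fin (n - 1) → EuclideanSpace ℝ (Fin n))
    (hu : Orthonormal ℝ u) (huv : ∀ a, ⟪u a, v⟫_ℝ = 0)
    (h : Fin (n - 1) → Fin (n - 1) → ℝ)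
    (hh : ∀ a b, h a b = (1 / ‖v‖) *
      (lam * (if a = b then (1 : ℝ) else 0) - Ric (u a) (u b)))
    (σ : ℝ) (hσ : σ = (1 / ((n : ℝ) - 1)) * ∑ a, h a a)
    (D : EuclideanSpace ℝ (Fin n) → EuclideanSpace ℝ (Fin n) →
      EuclideanSpace ℝ (Fin n) → ℝ)
    (hD : ∀ X Y Z, D X Y Z =
      (1 / (((n : ℝ) - 1) * ((n : ℝ) - 2))) *
        (Ric X v * ⟪Y, Z⟫_ℝ - Ric Y v * ⟪X, Z⟫_ℝ)
      + (1 / ((n : ℝ) - 2)) * (Ric Y Z * ⟪X, v⟫_ℝ - Ric X Z * ⟪Y, v⟫_ℝ)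
      - (scal / (((n : ℝ) - 1) * ((n : ℝ) - 2))) *
          (⟪X, v⟫_ℝ * ⟪Y, Z⟫_ℝ - ⟪Y, v⟫_ℝ * ⟪X, Z⟫_ℝ)) :
    (∑ i, ∑ j, ∑ k, (D (e i) (e j) (e k)) ^ 2
      = (2 * ‖v‖ ^ 4 / ((n : ℝ) - 2) ^ 2) *
          ∑ a, ∑ b, (h a b - σ * (if a = b then (1 : ℝ) else 0)) ^ 2
        + (m ^ 2 / (2 * ((n : ℝ) - 1) * ((n : ℝ) - 2))) *
            (‖p‖ ^ 2 - ⟪p, v⟫_ℝ ^ 2 / ‖v‖ ^ 2)) ∧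
    (m ≠ 1 →
      (m ^ 2 / (2 * ((n : ℝ) - 1) * ((n : ℝ) - 2))) *
          (‖p‖ ^ 2 - ⟪p, v⟫_ℝ ^ 2 / ‖v‖ ^ 2)
        = (m ^ 2 / (2 * ((n : ℝ) - 1) * ((n : ℝ) - 2) * (m - 1) ^ 2)) *
            ‖(-(m - 1)) • p -
              (⟪(-(m - 1)) • p, v⟫_ℝ / ‖v‖ ^ 2) • v‖ ^ 2) := by
  have hvn : ‖v‖ ≠ 0 := norm_ne_zero_iff.mpr hv
  have hn3 : (3 : ℝ) ≤ (n : ℝ) := by exact_mod_cast hn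
  have hn1 : ((n : ℝ) - 1) ≠ 0 := by nlinarith
  have hn2 : ((n : ℝ) - 2) ≠ 0 := by nlinarith
  constructor
  · -- ============ PART 1 ============
    -- Parseval identities over the basis e
    have hCC : (∑ i, ⟪e i, v⟫_ℝ ^ 2) = ‖v‖ ^ 2 := by
      calc (∑ i, ⟪e i, v⟫_ℝ ^ 2) = ∑ i, ⟪v, e i⟫_ℝ * ⟪e i, v⟫_ℝ :=
            sum1_congr fun i => by rw [sq, real_inner_comm v (e i)]
        _ = ‖v‖ ^ 2 := by rw [e.sum_inner_mul_inner, real_inner_self_eq_norm_sq]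
    have hQQ : (∑ i, ⟪e i, p⟫_ℝ ^ 2) = ‖p‖ ^ 2 := by
      calc (∑ i, ⟪e i, p⟫_ℝ ^ 2) = ∑ i, ⟪p, e i⟫_ℝ * ⟪e i, p⟫_ℝ :=
            sum1_congr fun i => by rw [sq, real_inner_comm p (e i)]
        _ = ‖p‖ ^ 2 := by rw [e.sum_inner_mul_inner, real_inner_self_eq_norm_sq]
    have hCQ : (∑ i, ⟪e i, v⟫_ℝ * ⟪e i, p⟫_ℝ) = ⟪p, v⟫_ℝ := by
      calc (∑ i, ⟪e i, v⟫_ℝ * ⟪e i, p⟫_ℝ) = ∑ i, ⟪p, e i⟫_ℝ * ⟪e i, v⟫_ℝ :=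
            sum1_congr fun i => by rw [real_inner_comm p (e i)]; ring
        _ = ⟪p, v⟫_ℝ := e.sum_inner_mul_inner p v
    -- Ricci contracted with v, expansions in the basis e
    have hRievj : ∀ i, (∑ j, Ric (e i) (e j) * ⟪e j, v⟫_ℝ)
        = rho * ⟪e i, v⟫_ℝ - (m / 2) * ⟪e i, p⟫_ℝ := by
      intro i
      have h0 : (∑ j, Ric (e i) (e j) * ⟪e j, v⟫_ℝ) = Ric (e i) v := by
        conv_rhs => rw [← e.sum_repr' v]
        rw [map_sum]
        exact sum1_congr fun j => by rw [map_smul, smul_eq_mul, mul_comm]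
      rw [h0, hRicv]
    have hRvej : ∀ k, (∑ i, ⟪e i, v⟫_ℝ * Ric (e i) (e k))
        = rho * ⟪e k, v⟫_ℝ - (m / 2) * ⟪e k, p⟫_ℝ := by
      intro k
      have h0 : (∑ i, ⟪e i, v⟫_ℝ * Ric (e i) (e k)) = Ric v (e k) := by
        conv_rhs => rw [← e.sum_repr' v]
        rw [map_sum, LinearMap.sum_apply]
        exact sum1_congr fun i => by rw [map_smul, LinearMap.smul_apply, smul_eq_mul]
      rw [h0, hRicSymm, hRicv]
    -- the adapted orthonormal basis f = {v/‖v‖} ∪ u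
    have hW1 : ⟪(‖v‖⁻¹ • v : EuclideanSpace ℝ (Fin n)), ‖v‖⁻¹ • v⟫_ℝ = 1 := by
      rw [real_inner_smul_left, real_inner_smul_right, real_inner_self_eq_norm_sq]
      field_simp
    have hvu : ∀ b, ⟪v, u b⟫_ℝ = 0 := fun b => by rw [real_inner_comm]; exact huv b
    have hg : Orthonormal ℝ
        (Sum.elim (fun _ : Fin 1 => (‖v‖⁻¹ • v : EuclideanSpace ℝ (Fin n))) u) := by
      rw [orthonormal_iff_ite]
      rintro (i | a) (j | b)
      · have hij : i = j := Subsingleton.elim i j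
        subst hij
        rw [Sum.elim_inl, if_pos rfl]
        exact hW1
      · rw [Sum.elim_inl, Sum.elim_inr, if_neg (by simp)]
        rw [real_inner_smul_left, hvu b, mul_zero]
      · rw [Sum.elim_inr, Sum.elim_inl, if_neg (by simp)]
        rw [real_inner_smul_right, huv a, mul_zero]
      · simp only [Sum.elim_inr, Sum.inr.injEq]
        exact orthonormal_iff_ite.mp hu a b
    have hcard : Fintype.card (Fin 1 ⊕ Fin (n - 1)) = n := by
      simp only [Fintype.card_sum, Fintype.card_fin]
      omega
    set f : OrthonormalBasis (Fin 1 ⊕ Fin (n - 1)) ℝ (EuclideanSpace ℝ (Fin n)) :=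
      OrthonormalBasis.mk hg
        ((hg.linearIndependent.span_eq_top_of_card_eq_finrank
          (by rw [hcard, finrank_euclideanSpace_fin])).ge) with hf
    have hfl : ∀ i : Fin 1, f (Sum.inl i) = ‖v‖⁻¹ • v := fun i => by
      rw [hf, OrthonormalBasis.coe_mk]; rfl
    have hfr : ∀ a, f (Sum.inr a) = u a := fun a => by
      rw [hf, OrthonormalBasis.coe_mk]; rfl
    -- the trace transfer
    have htr : scal = Ric (‖v‖⁻¹ • v) (‖v‖⁻¹ • v) + ∑ a, Ric (u a) (u a) := by
      rw [hscal, trace_basis e f Ric, Fintype.sum_sum_type]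
      simp [hfl, hfr]
    -- the Frobenius transfer
    have hsymW : ∀ b, Ric (‖v‖⁻¹ • v) (u b) = Ric (u b) (‖v‖⁻¹ • v) := fun b =>
      hRicSymm _ _
    have hfrob : (∑ i, ∑ j, (Ric (e i) (e j)) ^ 2)
        = (Ric (‖v‖⁻¹ • v) (‖v‖⁻¹ • v)) ^ 2
          + 2 * (∑ a, (Ric (u a) (‖v‖⁻¹ • v)) ^ 2)
          + ∑ a, ∑ b, (Ric (u a) (u b)) ^ 2 := by
      rw [frob_basis e f Ric]
      rw [Fintype.sum_sum_type]
      simp only [Fintype.sum_sum_type, hfl, hfr]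
      simp only [Finset.sum_add_distrib]
      have c1 : (∑ _x : Fin 1, ∑ _y : Fin 1, (Ric (‖v‖⁻¹ • v)) (‖v‖⁻¹ • v) ^ 2)
          = (Ric (‖v‖⁻¹ • v)) (‖v‖⁻¹ • v) ^ 2 := by simp
      have c2 : (∑ _x : Fin 1, ∑ b : Fin (n - 1), (Ric (‖v‖⁻¹ • v)) (u b) ^ 2)
          = ∑ b : Fin (n - 1), (Ric (u b)) (‖v‖⁻¹ • v) ^ 2 := by
        simp only [Finset.univ_unique, Finset.sum_singleton]
        exact sum1_congr fun b => by rw [hsymW b]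
      have c3 : (∑ a : Fin (n - 1), ∑ _x : Fin 1, (Ric (u a)) (‖v‖⁻¹ • v) ^ 2)
          = ∑ a : Fin (n - 1), (Ric (u a)) (‖v‖⁻¹ • v) ^ 2 := by
        exact sum1_congr fun a => by simp
      rw [c1, c2, c3]
      ring
    -- Parseval for p in the adapted basis
    have hWp : ⟪(‖v‖⁻¹ • v : EuclideanSpace ℝ (Fin n)), p⟫_ℝ = ‖v‖⁻¹ * ⟪p, v⟫_ℝ := by
      rw [real_inner_smul_left, real_inner_comm]
    have hY2 : (∑ a, ⟪u a, p⟫_ℝ ^ 2) = ‖p‖ ^ 2 - ⟪p, v⟫_ℝ ^ 2 / ‖v‖ ^ 2 := by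
      have h0 : (∑ x, ⟪p, f x⟫_ℝ * ⟪f x, p⟫_ℝ) = ‖p‖ ^ 2 := by
        rw [f.sum_inner_mul_inner, real_inner_self_eq_norm_sq]
      rw [Fintype.sum_sum_type] at h0
      have h1 : ∀ x : EuclideanSpace ℝ (Fin n), ⟪p, x⟫_ℝ * ⟪x, p⟫_ℝ = ⟪x, p⟫_ℝ ^ 2 :=
        fun x => by rw [real_inner_comm p x, sq]
      simp only [hfl, hfr, h1] at h0
      simp only [Finset.univ_unique, Finset.sum_singleton] at h0
      rw [hWp] at h0
      have h2 : (‖v‖⁻¹ * ⟪p, v⟫_ℝ) ^ 2 = ⟪p, v⟫_ℝ ^ 2 / ‖v‖ ^ 2 := by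
        field_simp
      rw [h2] at h0
      linarith
    -- components of Ric in the adapted basis
    have hRWW : Ric (‖v‖⁻¹ • v) (‖v‖⁻¹ • v) = rho - (m / 2) * ⟪p, v⟫_ℝ / ‖v‖ ^ 2 := by
      have h1 : Ric (‖v‖⁻¹ • v) (‖v‖⁻¹ • v) = ‖v‖⁻¹ * (Ric (‖v‖⁻¹ • v) v) := by
        rw [map_smul, smul_eq_mul]
      rw [h1, hRicv, real_inner_smul_left, real_inner_smul_left,
        real_inner_self_eq_norm_sq, real_inner_comm v p]
      field_simp
    have hRuW : ∀ a, (Ric (u a) (‖v‖⁻¹ • v)) ^ 2 = ((m / 2) ^ 2 / ‖v‖ ^ 2) * ⟪u a, p⟫_ℝ ^ 2 := by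
      intro a
      have h1 : Ric (u a) (‖v‖⁻¹ • v) = ‖v‖⁻¹ * Ric (u a) v := by
        rw [map_smul, smul_eq_mul]
      rw [h1, hRicv, huv]
      field_simp
      ring
    have hRuWs : (∑ a, (Ric (u a) (‖v‖⁻¹ • v)) ^ 2)
        = ((m / 2) ^ 2 / ‖v‖ ^ 2) * (‖p‖ ^ 2 - ⟪p, v⟫_ℝ ^ 2 / ‖v‖ ^ 2) := by
      rw [sum1_congr hRuW, ← Finset.mul_sum, hY2]
    -- the component formula for D
    have hDc : ∀ i j k, D (e i) (e j) (e k)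
        = (1 / (((n:ℝ) - 1) * ((n:ℝ) - 2))) * (Ric (e i) v - scal * ⟪e i, v⟫_ℝ)
            * (if j = k then (1:ℝ) else 0)
          - (1 / (((n:ℝ) - 1) * ((n:ℝ) - 2))) * (Ric (e j) v - scal * ⟪e j, v⟫_ℝ)
            * (if i = k then (1:ℝ) else 0)
          + ((1 / ((n:ℝ) - 2)) * Ric (e j) (e k)) * ⟪e i, v⟫_ℝ
          - ((1 / ((n:ℝ) - 2)) * Ric (e i) (e k)) * ⟪e j, v⟫_ℝ := by
      intro i j k
      have h1 : ⟪e j, e k⟫_ℝ = if j = k then (1:ℝ) else 0 :=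
        orthonormal_iff_ite.mp e.orthonormal j k
      have h2 : ⟪e i, e k⟫_ℝ = if i = k then (1:ℝ) else 0 :=
        orthonormal_iff_ite.mp e.orthonormal i k
      rw [hD, h1, h2]
      ring
    have hmain := sumT (fun i => (1 / (((n:ℝ) - 1) * ((n:ℝ) - 2)))
        * (Ric (e i) v - scal * ⟪e i, v⟫_ℝ))
      (fun i => ⟪e i, v⟫_ℝ)
      (fun i j => (1 / ((n:ℝ) - 2)) * Ric (e i) (e j))
    simp only [Fintype.card_fin] at hmain
    -- the five invariant sums
    have hA1 : (∑ i, ((1 / (((n:ℝ) - 1) * ((n:ℝ) - 2)))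
          * (Ric (e i) v - scal * ⟪e i, v⟫_ℝ)) ^ 2)
        = (1 / (((n:ℝ) - 1) * ((n:ℝ) - 2))) ^ 2 * ((rho - scal) ^ 2 * ‖v‖ ^ 2
            - (rho - scal) * m * ⟪p, v⟫_ℝ + m ^ 2 / 4 * ‖p‖ ^ 2) := by
      calc (∑ i, ((1 / (((n:ℝ) - 1) * ((n:ℝ) - 2)))
            * (Ric (e i) v - scal * ⟪e i, v⟫_ℝ)) ^ 2)
          = ∑ i, ((1 / (((n:ℝ) - 1) * ((n:ℝ) - 2))) ^ 2 * (rho - scal) ^ 2 * ⟪e i, v⟫_ℝ ^ 2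
              - (1 / (((n:ℝ) - 1) * ((n:ℝ) - 2))) ^ 2 * ((rho - scal) * m)
                * (⟪e i, v⟫_ℝ * ⟪e i, p⟫_ℝ)
              + (1 / (((n:ℝ) - 1) * ((n:ℝ) - 2))) ^ 2 * (m ^ 2 / 4) * ⟪e i, p⟫_ℝ ^ 2) :=
            sum1_congr fun i => by rw [hRicv (e i)]; ring
        _ = _ := by
            simp only [Finset.sum_add_distrib, Finset.sum_sub_distrib, ← Finset.mul_sum]
            rw [hCC, hCQ, hQQ]
            ring
    have hA2 : (∑ i, ((1 / (((n:ℝ) - 1) * ((n:ℝ) - 2)))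
          * (Ric (e i) v - scal * ⟪e i, v⟫_ℝ)) * ⟪e i, v⟫_ℝ)
        = (1 / (((n:ℝ) - 1) * ((n:ℝ) - 2))) * ((rho - scal) * ‖v‖ ^ 2
            - (m / 2) * ⟪p, v⟫_ℝ) := by
      calc (∑ i, ((1 / (((n:ℝ) - 1) * ((n:ℝ) - 2)))
            * (Ric (e i) v - scal * ⟪e i, v⟫_ℝ)) * ⟪e i, v⟫_ℝ)
          = ∑ i, ((1 / (((n:ℝ) - 1) * ((n:ℝ) - 2))) * (rho - scal) * ⟪e i, v⟫_ℝ ^ 2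
              - (1 / (((n:ℝ) - 1) * ((n:ℝ) - 2))) * (m / 2)
                * (⟪e i, v⟫_ℝ * ⟪e i, p⟫_ℝ)) :=
            sum1_congr fun i => by rw [hRicv (e i)]; ring
        _ = _ := by
            simp only [Finset.sum_sub_distrib, ← Finset.mul_sum]
            rw [hCC, hCQ]
            ring
    have hA3 : (∑ i, ∑ k, ((1 / ((n:ℝ) - 2)) * Ric (e i) (e k)) ^ 2)
        = (1 / ((n:ℝ) - 2)) ^ 2 * (∑ i, ∑ k, (Ric (e i) (e k)) ^ 2) := by
      simp only [mul_pow, ← Finset.mul_sum]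
    have hA4 : (∑ i, (1 / ((n:ℝ) - 2)) * Ric (e i) (e i))
        = (1 / ((n:ℝ) - 2)) * scal := by
      rw [← Finset.mul_sum, ← hscal]
    have hA5 : (∑ i, ∑ j, ((1 / (((n:ℝ) - 1) * ((n:ℝ) - 2)))
          * (Ric (e i) v - scal * ⟪e i, v⟫_ℝ))
          * ((1 / ((n:ℝ) - 2)) * Ric (e i) (e j)) * ⟪e j, v⟫_ℝ)
        = (1 / (((n:ℝ) - 1) * ((n:ℝ) - 2))) * (1 / ((n:ℝ) - 2))
          * ((rho - scal) * rho * ‖v‖ ^ 2 - (rho - scal) * (m / 2) * ⟪p, v⟫_ℝ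
             - (m / 2) * rho * ⟪p, v⟫_ℝ + m ^ 2 / 4 * ‖p‖ ^ 2) := by
      have inner5 : ∀ i, (∑ j, ((1 / (((n:ℝ) - 1) * ((n:ℝ) - 2)))
            * (Ric (e i) v - scal * ⟪e i, v⟫_ℝ))
            * ((1 / ((n:ℝ) - 2)) * Ric (e i) (e j)) * ⟪e j, v⟫_ℝ)
          = ((1 / (((n:ℝ) - 1) * ((n:ℝ) - 2))) * (Ric (e i) v - scal * ⟪e i, v⟫_ℝ)
              * (1 / ((n:ℝ) - 2))) * (rho * ⟪e i, v⟫_ℝ - (m / 2) * ⟪e i, p⟫_ℝ) := by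
        intro i
        rw [← hRievj i, Finset.mul_sum]
        exact sum1_congr fun j => by ring
      rw [sum1_congr inner5]
      calc (∑ i, ((1 / (((n:ℝ) - 1) * ((n:ℝ) - 2))) * (Ric (e i) v - scal * ⟪e i, v⟫_ℝ)
              * (1 / ((n:ℝ) - 2))) * (rho * ⟪e i, v⟫_ℝ - (m / 2) * ⟪e i, p⟫_ℝ))
          = ∑ i, ((1 / (((n:ℝ) - 1) * ((n:ℝ) - 2))) * (1 / ((n:ℝ) - 2))
                * ((rho - scal) * rho) * ⟪e i, v⟫_ℝ ^ 2
              - (1 / (((n:ℝ) - 1) * ((n:ℝ) - 2))) * (1 / ((n:ℝ) - 2))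
                * ((rho - scal) * (m / 2) + (m / 2) * rho)
                * (⟪e i, v⟫_ℝ * ⟪e i, p⟫_ℝ)
              + (1 / (((n:ℝ) - 1) * ((n:ℝ) - 2))) * (1 / ((n:ℝ) - 2))
                * (m ^ 2 / 4) * ⟪e i, p⟫_ℝ ^ 2) :=
            sum1_congr fun i => by rw [hRicv (e i)]; ring
        _ = _ := by
            simp only [Finset.sum_add_distrib, Finset.sum_sub_distrib, ← Finset.mul_sum]
            rw [hCC, hCQ, hQQ]
            ring
    have hA6 : (∑ k, (∑ i, ⟪e i, v⟫_ℝ * ((1 / ((n:ℝ) - 2)) * Ric (e i) (e k))) ^ 2)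
        = (1 / ((n:ℝ) - 2)) ^ 2 * (rho ^ 2 * ‖v‖ ^ 2 - rho * m * ⟪p, v⟫_ℝ
            + m ^ 2 / 4 * ‖p‖ ^ 2) := by
      have inner6 : ∀ k, (∑ i, ⟪e i, v⟫_ℝ * ((1 / ((n:ℝ) - 2)) * Ric (e i) (e k)))
          = (1 / ((n:ℝ) - 2)) * (rho * ⟪e k, v⟫_ℝ - (m / 2) * ⟪e k, p⟫_ℝ) := by
        intro k
        rw [← hRvej k, Finset.mul_sum]
        exact sum1_congr fun i => by ring
      rw [sum1_congr fun k => congrArg (· ^ 2) (inner6 k)]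
      calc (∑ k, ((1 / ((n:ℝ) - 2)) * (rho * ⟪e k, v⟫_ℝ - (m / 2) * ⟪e k, p⟫_ℝ)) ^ 2)
          = ∑ k, ((1 / ((n:ℝ) - 2)) ^ 2 * rho ^ 2 * ⟪e k, v⟫_ℝ ^ 2
              - (1 / ((n:ℝ) - 2)) ^ 2 * (rho * m) * (⟪e k, v⟫_ℝ * ⟪e k, p⟫_ℝ)
              + (1 / ((n:ℝ) - 2)) ^ 2 * (m ^ 2 / 4) * ⟪e k, p⟫_ℝ ^ 2) :=
            sum1_congr fun k => by ring
        _ = _ := by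
            simp only [Finset.sum_add_distrib, Finset.sum_sub_distrib, ← Finset.mul_sum]
            rw [hCC, hCQ, hQQ]
            ring
    -- the second fundamental form sums
    have hhaa : (∑ a, h a a)
        = (1 / ‖v‖) * (((n:ℝ) - 1) * lam - ∑ a, Ric (u a) (u a)) := by
      calc (∑ a, h a a)
          = ∑ a, ((1 / ‖v‖) * lam - (1 / ‖v‖) * Ric (u a) (u a)) :=
            sum1_congr fun a => by rw [hh]; simp; ring
        _ = _ := by
            simp only [Finset.sum_sub_distrib, Finset.sum_const, Finset.card_univ,
              Fintype.card_fin, nsmul_eq_mul, ← Finset.mul_sum]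
            rw [Nat.cast_sub (by omega : 1 ≤ n), Nat.cast_one]
            ring
    have hσ' : σ = (1 / ((n:ℝ) - 1)) * ((1 / ‖v‖)
        * (((n:ℝ) - 1) * lam - ∑ a, Ric (u a) (u a))) := by
      rw [hσ, hhaa]
    have hRS : (∑ a, ∑ b, (h a b - σ * (if a = b then (1:ℝ) else 0)) ^ 2)
        = ((n:ℝ) - 1) * (lam / ‖v‖ - σ) ^ 2
          - 2 * (lam / ‖v‖ - σ) * ((1 / ‖v‖) * (∑ a, Ric (u a) (u a)))
          + (1 / ‖v‖ ^ 2) * (∑ a, ∑ b, (Ric (u a) (u b)) ^ 2) := by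
      have hpt : ∀ a b, (h a b - σ * (if a = b then (1:ℝ) else 0)) ^ 2
          = (if a = b then (lam / ‖v‖ - σ) ^ 2
              - 2 * (lam / ‖v‖ - σ) * ((1 / ‖v‖) * Ric (u a) (u b)) else 0)
            + (1 / ‖v‖ ^ 2) * (Ric (u a) (u b)) ^ 2 := by
        intro a b
        rw [hh]
        rcases eq_or_ne a b with hab | hab
        · subst hab
          simp only [eq_self_iff_true, if_true]
          ring
        · simp only [if_neg hab]
          ring
      simp only [hpt]

      simp only [Finset.sum_add_distrib, Finset.sum_sub_distrib, Finset.sum_ite_eq,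
        Finset.mem_univ, if_true, Finset.sum_const, Finset.card_univ,
        Fintype.card_fin, nsmul_eq_mul, ← Finset.mul_sum]
      rw [Nat.cast_sub (by omega : 1 ≤ n), Nat.cast_one]
    -- trace relation
    have hS1 : (∑ a, Ric (u a) (u a))
        = scal - (rho - (m / 2) * ⟪p, v⟫_ℝ / ‖v‖ ^ 2) := by
      rw [← hRWW]
      linarith [htr]
    -- assemble everything
    calc (∑ i, ∑ j, ∑ k, (D (e i) (e j) (e k)) ^ 2)
        = ∑ i, ∑ j, ∑ k, ((1 / (((n:ℝ) - 1) * ((n:ℝ) - 2)))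
            * (Ric (e i) v - scal * ⟪e i, v⟫_ℝ) * (if j = k then (1:ℝ) else 0)
          - (1 / (((n:ℝ) - 1) * ((n:ℝ) - 2))) * (Ric (e j) v - scal * ⟪e j, v⟫_ℝ)
            * (if i = k then (1:ℝ) else 0)
          + ((1 / ((n:ℝ) - 2)) * Ric (e j) (e k)) * ⟪e i, v⟫_ℝ
          - ((1 / ((n:ℝ) - 2)) * Ric (e i) (e k)) * ⟪e j, v⟫_ℝ) ^ 2 :=
          sum3_congr fun i j k => by rw [hDc i j k]
      _ = _ := by
          rw [hmain, hA1, hA2, hA3, hA4, hA5, hA6, hfrob, hRuWs, hRWW, hRS, hσ', hS1, hCC]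
          field_simp
          ring

  · -- ============ PART 2 ============
    intro hm
    have hm1 : m - 1 ≠ 0 := sub_ne_zero.mpr hm
    have hwv : ⟪(-(m - 1)) • p, v⟫_ℝ = -(m - 1) * ⟪p, v⟫_ℝ :=
      real_inner_smul_left _ _ _
    have e1 : ‖(-(m - 1)) • p‖ ^ 2 = (m - 1) ^ 2 * ‖p‖ ^ 2 := by
      rw [norm_smul, mul_pow, Real.norm_eq_abs, sq_abs, neg_sq]
    have e2 : ‖(⟪(-(m - 1)) • p, v⟫_ℝ / ‖v‖ ^ 2) • v‖ ^ 2
        = (-(m - 1) * ⟪p, v⟫_ℝ / ‖v‖ ^ 2) ^ 2 * ‖v‖ ^ 2 := by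
      rw [norm_smul, mul_pow, Real.norm_eq_abs, sq_abs, hwv]
    have hnorm : ‖(-(m - 1)) • p - (⟪(-(m - 1)) • p, v⟫_ℝ / ‖v‖ ^ 2) • v‖ ^ 2
        = (m - 1) ^ 2 * ‖p‖ ^ 2 - (m - 1) ^ 2 * ⟪p, v⟫_ℝ ^ 2 / ‖v‖ ^ 2 := by
      rw [norm_sub_sq_real, e1, e2, real_inner_smul_right, hwv]
      field_simp
      ring
    rw [hnorm]
    field_simp
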